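/- Let R = μ₀R⁰ + Σ_{i=1}^m μᵢR^{Jᵢ} be a quasi-Clifford algebraic curvature tensor on an n-dimensional scalar product space (V,g), with Hurwitz-like constants satisfying cᵢ ≠ 0 for 1 ≤ i ≤ k and cᵢ = 0 for k < i ≤ m. Then for every nonnull X ∈ V, as polynomials in λ, det(ε_X·λ·id − 𝒥_X) = (ε_X)ⁿ · λ · (λ − μ₀)^{n−k−1} · ∏_{i=1}^k (λ − (μ₀ + 3cᵢμᵢ)). -/

import Mathlib

open Module Finset

/-- The algebraic curvature tensor `R⁰` of constant sectional curvature one. -/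
def R0 {V : Type*} [AddCommGroup V] [Module ℝ V] (g : LinearMap.BilinForm ℝ V)
    (X Y Z W : V) : ℝ :=
  g Y Z * g X W - g X Z * g Y W

/-- The algebraic curvature tensor `R^J` generated by a `g`-skew-adjoint endomorphism `J`. -/
def RJ {V : Type*} [AddCommGroup V] [Module ℝ V] (g : LinearMap.BilinForm ℝ V)
    (J : V →ₗ[ℝ] V) (X Y Z W : V) : ℝ :=
  g (J X) Z * g (J Y) W - g (J Y) Z * g (J X) W + 2 * g (J X) Y * g (J Z) W

lemma det_id_add_smulRight {V : Type*} [AddCommGroup V] [Module ℝ V] [FiniteDimensional ℝ V]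
    (φ : V →ₗ[ℝ] ℝ) (u : V) :
    LinearMap.det (LinearMap.id + φ.smulRight u) = 1 + φ u := by
  classical
  set b := Module.finBasis ℝ V
  rw [← LinearMap.det_toMatrix b]
  have h : LinearMap.toMatrix b b (LinearMap.id + φ.smulRight u)
      = 1 + Matrix.replicateCol (Fin 1) (fun i => b.repr u i) *
          Matrix.replicateRow (Fin 1) (fun j => φ (b j)) := by
    ext i j
    simp [LinearMap.toMatrix_apply, Matrix.mul_apply, Matrix.one_apply, mul_comm, Finsupp.single_apply, eq_comm]
  rw [h]
  refine (Matrix.det_one_add_replicateCol_mul_replicateRow (ι := Fin 1) _ _).trans ?_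
  congr 1
  conv_rhs => rw [← b.sum_repr u]
  simp [dotProduct, mul_comm]
  conv_rhs => rw [← b.sum_repr u, map_sum]
  simp only [map_smul, smul_eq_mul, mul_comm]


lemma det_id_add_sum_proj {V : Type*} [AddCommGroup V] [Module ℝ V] [FiniteDimensional ℝ V]
    (g : LinearMap.BilinForm ℝ V) {ι : Type*} [DecidableEq ι] (u : ι → V)
    (horth : ∀ i j, i ≠ j → g (u i) (u j) = 0) (t : ι → ℝ) (s : Finset ι) :
    LinearMap.det (LinearMap.id + ∑ i ∈ s, t i • (g.flip (u i)).smulRight (u i))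
      = ∏ i ∈ s, (1 + t i * g (u i) (u i)) := by
  classical
  induction s using Finset.induction_on with
  | empty => simp
  | @insert a s ha ih =>
    set Q : ι → V →ₗ[ℝ] V := fun i => (g.flip (u i)).smulRight (u i) with hQ
    have hAB : (t a • Q a) ∘ₗ (∑ i ∈ s, t i • Q i) = 0 := by
      ext y
      simp only [LinearMap.comp_apply, LinearMap.sum_apply, LinearMap.smul_apply,
        LinearMap.smulRight_apply, LinearMap.flip_apply, LinearMap.zero_apply, hQ,
        map_sum, map_smul]
      rw [Finset.sum_eq_zero (fun i hi => ?_)]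
      · have h0 : g (u i) (u a) = 0 := horth i a (fun h => ha (h ▸ hi))
        simp [LinearMap.flip_apply, h0]
    have key : (LinearMap.id + t a • Q a) ∘ₗ
        (LinearMap.id + ∑ i ∈ s, t i • Q i)
        = LinearMap.id + ∑ i ∈ insert a s, t i • Q i := by
      rw [LinearMap.add_comp, LinearMap.id_comp, LinearMap.comp_add, LinearMap.comp_id,
        hAB, add_zero, Finset.sum_insert ha]
      abel
    rw [← key, LinearMap.det_comp, ih, Finset.prod_insert ha]
    congr 1
    have hsm : t a • Q a = ((t a • g.flip (u a)) : V →ₗ[ℝ] ℝ).smulRight (u a) := by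
      ext y; simp [hQ, smul_smul]
    rw [hsm, det_id_add_smulRight]
    simp

/-- the characteristic equation of the Jacobi operator of a quasi-Clifford
curvature tensor: `det(ε_X λ id − 𝒥_X) = ε_Xⁿ λ (λ−μ₀)^{n−k−1} ∏_{i<k} (λ−(μ₀+3cᵢμᵢ))`
for every nonnull `X`. -/
theorem quasiClifford_char_equation
    {V : Type*} [AddCommGroup V] [Module ℝ V] [FiniteDimensional ℝ V]
    (g : LinearMap.BilinForm ℝ V) (hsymm : ∀ x y, g x y = g y x) (hnd : g.Nondegenerate)
    {m : ℕ} (μ₀ : ℝ) (μ c : Fin m → ℝ) (J : Fin m → V →ₗ[ℝ] V)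
    (hskew : ∀ i, ∀ x y : V, g (J i x) y = - g x (J i y))
    (hhur : ∀ i j, J i ∘ₗ J j + J j ∘ₗ J i
      = ((if i = j then 2 * c i else 0 : ℝ) • LinearMap.id : V →ₗ[ℝ] V))
    (R : V → V → V → V → ℝ)
    (hR : ∀ X Y Z W, R X Y Z W = μ₀ * R0 g X Y Z W + ∑ i, μ i * RJ g (J i) X Y Z W)
    (Jac : V → V →ₗ[ℝ] V)
    (hJac : ∀ X Y Z, g (Jac X Y) Z = R Y X X Z)
    (n k : ℕ) (hn : Module.finrank ℝ V = n) (hk : k ≤ m)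
    (hc₁ : ∀ i : Fin m, (i : ℕ) < k → c i ≠ 0)
    (hc₂ : ∀ i : Fin m, k ≤ (i : ℕ) → c i = 0) :
    ∀ X : V, g X X ≠ 0 → ∀ lam : ℝ,
      LinearMap.det ((g X X * lam) • (LinearMap.id : V →ₗ[ℝ] V) - Jac X)
        = (g X X) ^ n * lam * (lam - μ₀) ^ (n - k - 1) *
          ∏ i ∈ Finset.univ.filter (fun i : Fin m => (i : ℕ) < k),
            (lam - (μ₀ + 3 * c i * μ i)) := by
  classical
  intro X hX
  set ε := g X X with hε
  -- J i (J i X) = c i • X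
  have hJJ : ∀ i, J i (J i X) = c i • X := by
    intro i
    have h := congrArg (fun f : V →ₗ[ℝ] V => f X) (hhur i i)
    simp only [LinearMap.add_apply, LinearMap.comp_apply, if_pos rfl,
      LinearMap.smul_apply, LinearMap.id_apply, if_true] at h
    have h2 : (2:ℝ) • J i (J i X) = (2:ℝ) • (c i • X) := by
      rw [two_smul, h, smul_smul]
    exact smul_right_injective V two_ne_zero h2
  have hanti : ∀ i j, i ≠ j → J i (J j X) = - J j (J i X) := by
    intro i j hij
    have h := congrArg (fun f : V →ₗ[ℝ] V => f X) (hhur i j)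
    simp only [LinearMap.add_apply, LinearMap.comp_apply, if_neg hij,
      LinearMap.smul_apply, LinearMap.id_apply, zero_smul, LinearMap.zero_apply] at h
    exact eq_neg_of_add_eq_zero_left h
  -- g X (J i X) = 0
  have hXJ : ∀ i, g X (J i X) = 0 := by
    intro i
    linarith [hskew i X X, hsymm (J i X) X]
  have hJX : ∀ i, g (J i X) X = 0 := fun i => by rw [hsymm]; exact hXJ i
  -- g (J i X) (J j X) = 0 for i ≠ j
  have hJJorth : ∀ i j, i ≠ j → g (J i X) (J j X) = 0 := by
    intro i j hij
    have h1 : g (J i X) (J j X) = - g X (J i (J j X)) := hskew i X (J j X)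
    have h2 : g X (J i (J j X)) = - g X (J j (J i X)) := by rw [hanti i j hij, map_neg]
    have h3 : g X (J j (J i X)) = g (J j (J i X)) X := hsymm _ _
    have h4 : g (J j (J i X)) X = - g (J i X) (J j X) := hskew j (J i X) X
    rw [h2, h3, h4] at h1
    linarith
  -- g (J i X) (J i X) = - c i * ε
  have hJnorm : ∀ i, g (J i X) (J i X) = - (c i * ε) := by
    intro i
    have h1 : g (J i X) (J i X) = - g X (J i (J i X)) := hskew i X (J i X)
    rw [hJJ i, map_smul] at h1
    simp only [smul_eq_mul] at h1
    rw [h1, hε]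
  -- the family of vectors
  set u : Fin (m+1) → V := Fin.cons X (fun i => J i X) with hu
  have hu0 : u 0 = X := rfl
  have hus : ∀ i : Fin m, u i.succ = J i X := fun i => by simp [hu]
  have horth : ∀ p q, p ≠ q → g (u p) (u q) = 0 := by
    intro p q hpq
    induction p using Fin.cases with
    | zero =>
      induction q using Fin.cases with
      | zero => exact absurd rfl hpq
      | succ j => rw [hu0, hus]; exact hXJ j
    | succ i =>
      induction q using Fin.cases with
      | zero => rw [hu0, hus]; exact hJX i
      | succ j =>
        rw [hus, hus]
        exact hJJorth i j (fun h => hpq (by rw [h]))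
  -- the Jacobi operator formula
  have hJacX : Jac X = (μ₀ * ε) • LinearMap.id -
      (μ₀ • (g.flip X).smulRight X +
        ∑ i, (3 * μ i) • (g.flip (J i X)).smulRight (J i X)) := by
    apply LinearMap.ext
    intro Y
    set T := (μ₀ * ε) • (LinearMap.id : V →ₗ[ℝ] V) -
      (μ₀ • (g.flip X).smulRight X +
        ∑ i, (3 * μ i) • (g.flip (J i X)).smulRight (J i X)) with hT
    have hflip : ∀ a b : V, g.flip a b = g b a := fun _ _ => rfl
    have hz : ∀ Z, g (Jac X Y - T Y) Z = 0 := by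
      intro Z
      rw [map_sub, LinearMap.sub_apply, hJac, hR]
      have hTY : g (T Y) Z = μ₀ * ε * g Y Z - μ₀ * (g Y X * g X Z)
          - ∑ i, 3 * μ i * (g Y (J i X) * g (J i X) Z) := by
        rw [hT]
        simp only [LinearMap.sub_apply, LinearMap.add_apply, LinearMap.smul_apply,
          LinearMap.id_apply, LinearMap.sum_apply, LinearMap.smulRight_apply,
          hflip, map_sub, map_add, map_smul, map_sum, smul_eq_mul]
        ring
      rw [hTY]
      have hterm : ∀ i : Fin m, μ i * RJ g (J i) Y X X Z
          = - (3 * μ i * (g Y (J i X) * g (J i X) Z)) := by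
        intro i
        rw [RJ]
        rw [hJX i, hskew i Y X]
        ring
      rw [Finset.sum_congr rfl (fun i _ => hterm i), R0]
      rw [hsymm X X, ← hε]
      simp only [Finset.sum_neg_distrib]
      ring
    have := hnd.1 _ (fun Z => hz Z)
    rw [sub_eq_zero] at this
    rw [this]
  -- k + 1 ≤ n
  have hkn : k + 1 ≤ n := by
    set w : Fin (k+1) → V := Fin.cons X (fun j : Fin k => J (Fin.castLE hk j) X) with hw
    have hw0 : w 0 = X := rfl
    have hws : ∀ j : Fin k, w j.succ = J (Fin.castLE hk j) X := fun j => by simp [hw]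
    have hworth : LinearMap.BilinForm.iIsOrtho g w := by
      rw [LinearMap.BilinForm.iIsOrtho_def]
      intro p q hpq
      induction p using Fin.cases with
      | zero =>
        induction q using Fin.cases with
        | zero => exact absurd rfl hpq
        | succ j => rw [hw0, hws]; exact hXJ _
      | succ i =>
        induction q using Fin.cases with
        | zero => rw [hw0, hws]; exact hJX _
        | succ j =>
          rw [hws, hws]
          refine hJJorth _ _ (fun h => hpq ?_)
          have := Fin.castLE_injective hk h
          rw [this]
    have hdiag : ∀ p, ¬ LinearMap.BilinForm.IsOrtho g (w p) (w p) := by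
      intro p
      induction p using Fin.cases with
      | zero => rw [hw0]; exact hX
      | succ j =>
        rw [LinearMap.BilinForm.isOrtho_def, hws, hJnorm]
        simp only [neg_eq_zero]
        exact fun h => (mul_eq_zero.mp h).elim
          (hc₁ _ (by simpa using j.isLt)) hX
    have hli := LinearMap.BilinForm.linearIndependent_of_iIsOrtho hworth hdiag
    have := hli.fintype_card_le_finrank
    simpa [hn] using this
  -- cardinality of the filtered index set
  have hcard : (Finset.univ.filter (fun i : Fin m => (i : ℕ) < k)).card = k := by
    have hset : Finset.univ.filter (fun i : Fin m => (i : ℕ) < k)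
        = Finset.map (Fin.castLEEmb hk) Finset.univ := by
      ext i
      simp only [Finset.mem_filter, Finset.mem_univ, true_and, Finset.mem_map,
        Fin.castLEEmb_apply]
      constructor
      · intro hi
        exact ⟨⟨i.val, hi⟩, by ext; simp⟩
      · rintro ⟨j, rfl⟩
        simpa using j.isLt
    rw [hset, Finset.card_map, Finset.card_univ, Fintype.card_fin]
  -- main identity away from lam = μ₀
  have main : ∀ l : ℝ, l ≠ μ₀ →
      LinearMap.det ((ε * l) • (LinearMap.id : V →ₗ[ℝ] V) - Jac X)
        = ε ^ n * l * (l - μ₀) ^ (n - k - 1) *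
          ∏ i ∈ Finset.univ.filter (fun i : Fin m => (i : ℕ) < k),
            (l - (μ₀ + 3 * c i * μ i)) := by
    intro l hl
    set α := ε * (l - μ₀) with hα
    have hα0 : α ≠ 0 := mul_ne_zero hX (sub_ne_zero.mpr hl)
    set t : Fin (m+1) → ℝ := Fin.cons (μ₀ / α) (fun i => 3 * μ i / α) with ht
    have e1 : α * (μ₀ / α) = μ₀ := by field_simp
    have e2 : ∀ i : Fin m, α * (3 * μ i / α) = 3 * μ i := fun i => by field_simp
    have hdecomp : (ε * l) • (LinearMap.id : V →ₗ[ℝ] V) - Jac X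
        = α • (LinearMap.id + ∑ p, t p • (g.flip (u p)).smulRight (u p)) := by
      rw [hJacX, Fin.sum_univ_succ]
      simp only [ht, Fin.cons_zero, Fin.cons_succ, hu0, hus]
      rw [smul_add, smul_add, smul_smul, e1, Finset.smul_sum]
      have hsum : (∑ i : Fin m, α • ((3 * μ i / α) • (g.flip (J i X)).smulRight (J i X)))
          = ∑ i : Fin m, (3 * μ i) • (g.flip (J i X)).smulRight (J i X) :=
        Finset.sum_congr rfl fun i _ => by rw [smul_smul, e2 i]
      rw [hsum, hα]
      module
    rw [hdecomp, LinearMap.det_smul, det_id_add_sum_proj g u horth t Finset.univ, hn]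
    rw [Fin.prod_univ_succ]
    simp only [ht, Fin.cons_zero, Fin.cons_succ, hu0, hus, ← hε, hJnorm]
    -- split the product
    rw [← Finset.prod_filter_mul_prod_filter_not Finset.univ (fun i : Fin m => (i : ℕ) < k)]
    have h2 : (∏ i ∈ Finset.univ.filter (fun i : Fin m => ¬ (i : ℕ) < k),
        (1 + 3 * μ i / α * -(c i * ε))) = 1 := by
      refine Finset.prod_eq_one fun i hi => ?_
      rw [hc₂ i (not_lt.mp (Finset.mem_filter.mp hi).2)]
      ring
    have h3 : (∏ i ∈ Finset.univ.filter (fun i : Fin m => (i : ℕ) < k),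
        (1 + 3 * μ i / α * -(c i * ε)))
        = (∏ i ∈ Finset.univ.filter (fun i : Fin m => (i : ℕ) < k),
            (ε * (l - (μ₀ + 3 * c i * μ i)))) * (α⁻¹) ^ k := by
      have hpc : (α⁻¹) ^ k = ∏ _i ∈ Finset.univ.filter (fun i : Fin m => (i : ℕ) < k), α⁻¹ := by
        rw [Finset.prod_const, hcard]
      rw [hpc, ← Finset.prod_mul_distrib]
      refine Finset.prod_congr rfl fun i _ => ?_
      rw [hα]
      field_simp
      ring
    rw [h2, h3, mul_one]
    have h4 : (1 : ℝ) + μ₀ / α * ε = ε * l * α⁻¹ := by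
      rw [hα]; field_simp; ring
    rw [h4]
    rw [Finset.prod_mul_distrib, Finset.prod_const, hcard]
    obtain ⟨d, rfl⟩ : ∃ d, n = d + k + 1 := ⟨n - k - 1, by omega⟩
    have hd : d + k + 1 - k - 1 = d := by omega
    set P := ∏ i ∈ Finset.univ.filter (fun i : Fin m => (i : ℕ) < k),
      (l - (μ₀ + 3 * c i * μ i)) with hP
    rw [hd, hα]
    simp only [mul_pow]
    have hlm : l - μ₀ ≠ 0 := sub_ne_zero.mpr hl
    field_simp
    have hB : ε ^ k * (l * ε - μ₀ * ε)⁻¹ ^ k * (l - μ₀) ^ k = 1 := by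
      rw [inv_pow, show l * ε - μ₀ * ε = ε * (l - μ₀) by ring, mul_pow]; field_simp
    linear_combination (l ^ 2 - l * μ₀) * P * (l - μ₀) ^ d * hB
  -- conclude by continuity
  intro lam
  have hcont1 : Continuous fun l : ℝ =>
      LinearMap.det ((ε * l) • (LinearMap.id : V →ₗ[ℝ] V) - Jac X) := by
    have hrepr : ∀ l : ℝ, LinearMap.det ((ε * l) • (LinearMap.id : V →ₗ[ℝ] V) - Jac X)
        = Matrix.det ((ε * l) • (1 : Matrix (Fin (finrank ℝ V)) (Fin (finrank ℝ V)) ℝ)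
            - LinearMap.toMatrix (Module.finBasis ℝ V) (Module.finBasis ℝ V) (Jac X)) := by
      intro l
      rw [← LinearMap.det_toMatrix (Module.finBasis ℝ V), map_sub, _root_.map_smul,
        LinearMap.toMatrix_id]
    simp only [hrepr]
    exact Continuous.matrix_det (by fun_prop)
  have hcont2 : Continuous fun l : ℝ => ε ^ n * l * (l - μ₀) ^ (n - k - 1) *
      ∏ i ∈ Finset.univ.filter (fun i : Fin m => (i : ℕ) < k),
        (l - (μ₀ + 3 * c i * μ i)) := by
    apply Continuous.mul
    · fun_prop
    · exact continuous_finset_prod _ (fun i _ => by fun_prop)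
  have hfg := Continuous.ext_on (dense_compl_singleton μ₀) hcont1 hcont2
    (fun x hx => main x (by simpa using hx))
  exact congrFun hfg lam
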